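/- Let d ≥ 1 be an integer, α ∈ (0,1), m > max(0,(d-2)/d), and b := α/(2+d(m-1)) > 0. Define Q : (0,1) → ℝ by Q(η) = (1/Γ(1-α)) ∫_η^1 (1-σ^{1/b})^{-α} σ^{1-d} dσ. Then Q(η)/(1-η)^{1-α} tends to b^α/Γ(2-α) as η → 1⁻. -/

import Mathlib

open MeasureTheory Set Filter

/-- behavior of the kernel profile `Q` at `η = 1⁻`:
`Q(η)/(1-η)^{1-α} → b^α/Γ(2-α)`. -/
theorem kernel_limit_at_one (d : ℕ) (hd : 1 ≤ d) (α m b : ℝ)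
    (hα : α ∈ Set.Ioo (0:ℝ) 1)
    (hm : m > max 0 (((d:ℝ) - 2) / d))
    (hb : b = α / (2 + (d:ℝ) * (m - 1))) :
    Filter.Tendsto
      (fun η : ℝ =>
        ((1 / Real.Gamma (1 - α)) *
          ∫ σ in Set.Ioo η 1, (1 - σ ^ (1 / b)) ^ (-α) * σ ^ (1 - (d:ℝ)))
        / (1 - η) ^ (1 - α))
      (nhdsWithin 1 (Set.Ioo 0 1))
      (nhds (b ^ α / Real.Gamma (2 - α))) := by
  obtain ⟨hα0, hα1⟩ := hα
  have hdpos : (0:ℝ) < d := by exact_mod_cast hd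
  have hd1 : (1:ℝ) - (d:ℝ) ≤ 0 := by
    have : (1:ℝ) ≤ d := by exact_mod_cast hd
    linarith
  have hm' : ((d:ℝ) - 2) / d < m := lt_of_le_of_lt (le_max_right _ _) hm
  have hden : (0:ℝ) < 2 + (d:ℝ) * (m - 1) := by
    have := (div_lt_iff₀ hdpos).1 hm'
    nlinarith
  have hbpos : 0 < b := hb ▸ div_pos hα0 hden
  have ht : 0 < 1 / b := by positivity
  set g : ℝ → ℝ := fun σ => (1 - σ ^ (1 / b)) ^ (-α) * σ ^ (1 - (d:ℝ)) with hg
  have hgm : Measurable g := by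
    apply Measurable.mul <;> fun_prop
  -- key pointwise inequality
  set k : ℝ := min (1 / b) 1 with hkdef
  have hkpos : 0 < k := lt_min ht one_pos
  have key : ∀ σ ∈ Set.Icc (0:ℝ) 1, k * (1 - σ) ≤ 1 - σ ^ (1 / b) := by
    rintro σ ⟨h0, h1⟩
    rcases le_total (1 / b) 1 with h | h
    · have hs : (-1:ℝ) ≤ σ - 1 := by linarith
      have hB := rpow_one_add_le_one_add_mul_self hs ht.le h
      have hσ : (1:ℝ) + (σ - 1) = σ := by ring
      rw [hσ] at hB
      have hk : k = 1 / b := min_eq_left h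
      nlinarith
    · have hk : k = 1 := min_eq_right h
      rcases eq_or_lt_of_le h0 with rfl | h0'
      · rw [hk, Real.zero_rpow ht.ne']; norm_num
      · have := Real.rpow_le_rpow_of_exponent_ge h0' h1 h
        rw [Real.rpow_one] at this
        nlinarith
  -- integrability
  have hint : ∀ c ∈ Set.Ioo (0:ℝ) 1, IntervalIntegrable g volume c 1 := by
    rintro c ⟨hc0, hc1⟩
    set C : ℝ := k ^ (-α) * c ^ (1 - (d:ℝ)) with hC
    have hCpos : 0 ≤ C := by positivity
    have base0 : IntervalIntegrable (fun x : ℝ => x ^ (-α)) volume 0 (1 - c) :=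
      intervalIntegral.intervalIntegrable_rpow' (by linarith)
    have base1 : IntervalIntegrable (fun x : ℝ => (1 - x) ^ (-α)) volume c 1 := by
      have := (base0.comp_sub_left 1).symm
      simpa using this
    have base : IntervalIntegrable (fun x : ℝ => C * (1 - x) ^ (-α)) volume c 1 :=
      base1.const_mul C
    refine base.mono_fun' (hgm.stronglyMeasurable.aestronglyMeasurable.restrict) ?_
    rw [Set.uIoc_of_le hc1.le]
    refine (ae_restrict_iff' measurableSet_Ioc).2 (Filter.Eventually.of_forall ?_)
    rintro σ ⟨hσ0, hσ1⟩
    have hσ0' : 0 < σ := lt_trans hc0 hσ0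
    have hpow1 : σ ^ (1 / b) ≤ 1 := Real.rpow_le_one hσ0'.le hσ1 ht.le
    have h1σ : 0 ≤ 1 - σ ^ (1 / b) := by linarith
    have hgnn : 0 ≤ g σ := mul_nonneg (Real.rpow_nonneg h1σ _) (Real.rpow_nonneg hσ0'.le _)
    have bound1 : (1 - σ ^ (1 / b)) ^ (-α) ≤ k ^ (-α) * (1 - σ) ^ (-α) := by
      rcases eq_or_lt_of_le hσ1 with rfl | hσlt
      · simp [Real.one_rpow, Real.zero_rpow (by linarith : -α ≠ 0)]
      · have hkey := key σ ⟨hσ0'.le, hσ1⟩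
        have hklt : 0 < k * (1 - σ) := mul_pos hkpos (by linarith)
        calc (1 - σ ^ (1 / b)) ^ (-α) ≤ (k * (1 - σ)) ^ (-α) :=
              Real.rpow_le_rpow_of_nonpos hklt hkey (by linarith)
          _ = k ^ (-α) * (1 - σ) ^ (-α) := Real.mul_rpow hkpos.le (by linarith)
    have bound2 : σ ^ (1 - (d:ℝ)) ≤ c ^ (1 - (d:ℝ)) :=
      Real.rpow_le_rpow_of_nonpos hc0 hσ0.le hd1
    have : g σ ≤ C * (1 - σ) ^ (-α) := by
      calc g σ = (1 - σ ^ (1 / b)) ^ (-α) * σ ^ (1 - (d:ℝ)) := rfl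
        _ ≤ (k ^ (-α) * (1 - σ) ^ (-α)) * (c ^ (1 - (d:ℝ))) := by
            apply mul_le_mul bound1 bound2 (Real.rpow_nonneg hσ0'.le _)
            exact mul_nonneg (Real.rpow_nonneg hkpos.le _)
              (Real.rpow_nonneg (by linarith) _)
        _ = C * (1 - σ) ^ (-α) := by rw [hC]; ring
    simpa [Real.norm_eq_abs, abs_of_nonneg hgnn] using this
  -- continuity of g on (0,1)
  have hcont : ∀ η ∈ Set.Ioo (0:ℝ) 1, ContinuousAt g η := by
    rintro η ⟨hη0, hη1⟩
    have hpow : η ^ (1 / b) < 1 := Real.rpow_lt_one hη0.le hη1 ht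
    have hin : ContinuousAt (fun σ : ℝ => 1 - σ ^ (1 / b)) η :=
      continuousAt_const.sub (continuousAt_id.rpow_const (Or.inl hη0.ne'))
    have h1 : ContinuousAt (fun σ : ℝ => (1 - σ ^ (1 / b)) ^ (-α)) η :=
      hin.rpow_const (Or.inl (by dsimp; intro h; nlinarith))
    exact h1.mul (continuousAt_id.rpow_const (Or.inl hη0.ne'))
  -- F and its derivative
  set F : ℝ → ℝ := fun u => ∫ σ in u..1, g σ with hF
  have hF' : ∀ η ∈ Set.Ioo (1/2 : ℝ) 1, HasDerivAt F (-g η) η := by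
    rintro η ⟨hη0, hη1⟩
    have hη : η ∈ Set.Ioo (0:ℝ) 1 := ⟨by linarith, hη1⟩
    exact intervalIntegral.integral_hasDerivAt_left (hint η hη)
      hgm.stronglyMeasurable.stronglyMeasurableAtFilter (hcont η hη)
  -- G and its derivative
  set G : ℝ → ℝ := fun η => (1 - η) ^ (1 - α) with hG
  have hG' : ∀ η ∈ Set.Ioo (1/2 : ℝ) 1, HasDerivAt G (-((1 - α) * (1 - η) ^ (-α))) η := by
    rintro η ⟨hη0, hη1⟩
    have h1η : (0:ℝ) < 1 - η := by linarith
    have hout : HasDerivAt (fun x : ℝ => x ^ (1 - α)) ((1 - α) * (1 - η) ^ (1 - α - 1)) (1 - η) :=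
      Real.hasDerivAt_rpow_const (Or.inl h1η.ne')
    have hin : HasDerivAt (fun η : ℝ => 1 - η) (-1) η := by
      simpa using (hasDerivAt_id η).const_sub 1
    have := hout.comp η hin
    refine this.congr_deriv ?_
    rw [show (1:ℝ) - α - 1 = -α by ring]; ring
  -- F tends to 0
  have hF0 : Filter.Tendsto F (nhdsWithin 1 (Set.Iio 1)) (nhds 0) := by
    have h14 : (1/4 : ℝ) ∈ Set.Ioo (0:ℝ) 1 := by norm_num
    have hio : IntegrableOn g (Set.Icc (1/2 : ℝ) 1) volume := by
      have := (hint _ h14).1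
      refine this.mono ?_ le_rfl
      intro x hx
      exact ⟨by rcases hx with ⟨h, _⟩; linarith, hx.2⟩
    have hcF : ContinuousOn F (Set.uIcc (1/2 : ℝ) 1) := by
      apply intervalIntegral.continuousOn_primitive_interval_left
      rwa [Set.uIcc_of_le (by norm_num : (1/2:ℝ) ≤ 1)]
    have hc1 : ContinuousWithinAt F (Set.uIcc (1/2 : ℝ) 1) 1 := by
      apply hcF; rw [Set.uIcc_of_le (by norm_num : (1/2:ℝ) ≤ 1)]; exact ⟨by norm_num, le_rfl⟩
    have hF1 : F 1 = 0 := intervalIntegral.integral_same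
    have : Filter.Tendsto F (nhdsWithin 1 (Set.uIcc (1/2:ℝ) 1)) (nhds 0) := by
      rw [← hF1]; exact hc1
    refine this.mono_left ?_
    rw [← nhdsWithin_Ioo_eq_nhdsLT (show (1/2:ℝ) < 1 by norm_num)]
    apply nhdsWithin_mono
    rw [Set.uIcc_of_le (by norm_num : (1/2:ℝ) ≤ 1)]
    exact Set.Ioo_subset_Icc_self
  -- G tends to 0
  have hG0 : Filter.Tendsto G (nhdsWithin 1 (Set.Iio 1)) (nhds 0) := by
    have hc : ContinuousAt G 1 :=
      (continuousAt_const.sub continuousAt_id).rpow_const (Or.inr (by linarith))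
    have hGv : G 1 = 0 := by
      simp [hG, Real.zero_rpow (by linarith : (1:ℝ) - α ≠ 0)]
    have := hc.tendsto.mono_left (nhdsWithin_le_nhds (s := Set.Iio 1))
    rwa [hGv] at this
  -- limit of derivative quotient
  have hslope : Filter.Tendsto (fun η : ℝ => (1 - η ^ (1 / b)) / (1 - η))
      (nhdsWithin 1 {(1:ℝ)}ᶜ) (nhds (1 / b)) := by
    have hD : HasDerivAt (fun σ : ℝ => σ ^ (1 / b)) (1 / b) 1 := by
      have := Real.hasDerivAt_rpow_const (x := (1:ℝ)) (p := 1 / b) (Or.inl one_ne_zero)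
      simpa using this
    have hsl := hasDerivAt_iff_tendsto_slope.1 hD
    refine hsl.congr ?_
    intro x
    rw [slope_def_field, Real.one_rpow]
    rw [← neg_sub (1:ℝ) (x ^ (1/b)), ← neg_sub (1:ℝ) x, neg_div_neg_eq]
  have hratio : Filter.Tendsto
      (fun η : ℝ => ((1 - η ^ (1 / b)) / (1 - η)) ^ (-α) * η ^ (1 - (d:ℝ)))
      (nhdsWithin 1 (Set.Iio 1)) (nhds (b ^ α)) := by
    have hc1 : ContinuousAt (fun x : ℝ => x ^ (-α)) (1 / b) :=
      Real.continuousAt_rpow_const _ _ (Or.inl ht.ne')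
    have h1 : Filter.Tendsto (fun η : ℝ => ((1 - η ^ (1 / b)) / (1 - η)) ^ (-α))
        (nhdsWithin 1 {(1:ℝ)}ᶜ) (nhds ((1 / b) ^ (-α))) := hc1.tendsto.comp hslope
    have h2 : Filter.Tendsto (fun η : ℝ => η ^ (1 - (d:ℝ)))
        (nhdsWithin 1 {(1:ℝ)}ᶜ) (nhds 1) := by
      have : ContinuousAt (fun η : ℝ => η ^ (1 - (d:ℝ))) 1 :=
        Real.continuousAt_rpow_const _ _ (Or.inl one_ne_zero)
      have := this.tendsto.mono_left (nhdsWithin_le_nhds (s := {(1:ℝ)}ᶜ))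
      simpa using this
    have hval : (1 / b) ^ (-α) = b ^ α := by
      rw [one_div, Real.inv_rpow hbpos.le, Real.rpow_neg hbpos.le, inv_inv]
    have := (h1.mul h2).mono_left
      (nhdsWithin_mono _ (fun x hx => ne_of_lt hx : Set.Iio 1 ⊆ {(1:ℝ)}ᶜ))
    simpa only [mul_one, hval] using this
  have hdiv : Filter.Tendsto
      (fun η : ℝ => (-g η) / (-((1 - α) * (1 - η) ^ (-α))))
      (nhdsWithin 1 (Set.Iio 1)) (nhds (b ^ α / (1 - α))) := by
    have heq : ∀ η ∈ Set.Ioo (1/2 : ℝ) 1,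
        (-g η) / (-((1 - α) * (1 - η) ^ (-α)))
          = (((1 - η ^ (1 / b)) / (1 - η)) ^ (-α) * η ^ (1 - (d:ℝ))) / (1 - α) := by
      rintro η ⟨hη0, hη1⟩
      have hη0' : (0:ℝ) < η := by linarith
      have h1η : (0:ℝ) < 1 - η := by linarith
      have hpow : η ^ (1 / b) < 1 := Real.rpow_lt_one hη0'.le hη1 ht
      have hnum : (0:ℝ) < 1 - η ^ (1 / b) := by linarith
      have hdivr : ((1 - η ^ (1 / b)) / (1 - η)) ^ (-α)
          = (1 - η ^ (1 / b)) ^ (-α) / (1 - η) ^ (-α) :=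
        Real.div_rpow hnum.le h1η.le ..
      have hGne : ((1 - η) ^ (-α)) ≠ 0 := ne_of_gt (Real.rpow_pos_of_pos h1η _)
      rw [neg_div_neg_eq, hg, hdivr]
      field_simp
    have h := hratio.div_const (1 - α)
    refine Filter.Tendsto.congr' ?_ h
    have hmem : Set.Ioo (1/2 : ℝ) 1 ∈ nhdsWithin 1 (Set.Iio 1) := by
      rw [← nhdsWithin_Ioo_eq_nhdsLT (show (1/2:ℝ) < 1 by norm_num)]
      exact self_mem_nhdsWithin
    filter_upwards [hmem] with η hη
    exact (heq η hη).symm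
  -- L'Hopital
  have hmemIoo : Set.Ioo (1/2 : ℝ) 1 ∈ nhdsWithin (1:ℝ) (Set.Iio 1) := by
    rw [← nhdsWithin_Ioo_eq_nhdsLT (show (1/2:ℝ) < 1 by norm_num)]
    exact self_mem_nhdsWithin
  have hlhop : Filter.Tendsto (fun η => F η / G η) (nhdsWithin 1 (Set.Iio 1))
      (nhds (b ^ α / (1 - α))) := by
    apply HasDerivAt.lhopital_zero_nhdsLT
      (f' := fun η => -g η) (g' := fun η => -((1 - α) * (1 - η) ^ (-α)))
    · filter_upwards [hmemIoo] with η hη using hF' η hη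
    · filter_upwards [hmemIoo] with η hη using hG' η hη
    · filter_upwards [hmemIoo] with η hη
      have h1η : (0:ℝ) < 1 - η := by linarith [hη.2]
      have : (0:ℝ) < (1 - α) * (1 - η) ^ (-α) :=
        mul_pos (by linarith) (Real.rpow_pos_of_pos h1η _)
      exact neg_ne_zero.2 (ne_of_gt this)
    · exact hF0
    · exact hG0
    · exact hdiv
  -- final assembly
  have hΓpos : 0 < Real.Gamma (1 - α) := Real.Gamma_pos_of_pos (by linarith)
  have hΓ2 : Real.Gamma (2 - α) = (1 - α) * Real.Gamma (1 - α) := by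
    have := Real.Gamma_add_one (s := 1 - α) (by linarith)
    rw [show (1:ℝ) - α + 1 = 2 - α by ring] at this
    exact this
  have hmain := (hlhop.const_mul (1 / Real.Gamma (1 - α))).mono_left
    (nhdsWithin_mono _ (fun x hx => hx.2 : Set.Ioo (0:ℝ) 1 ⊆ Set.Iio 1))
  have hlim : 1 / Real.Gamma (1 - α) * (b ^ α / (1 - α)) = b ^ α / Real.Gamma (2 - α) := by
    rw [hΓ2]; field_simp
  rw [hlim] at hmain
  refine hmain.congr' ?_
  have hmem2 : Set.Ioo (0:ℝ) 1 ∈ nhdsWithin (1:ℝ) (Set.Ioo 0 1) := self_mem_nhdsWithin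
  filter_upwards [hmem2] with η hη
  have hset : F η = ∫ σ in Set.Ioo η 1, (1 - σ ^ (1 / b)) ^ (-α) * σ ^ (1 - (d:ℝ)) := by
    simp only [hF]
    rw [intervalIntegral.integral_of_le hη.2.le, MeasureTheory.integral_Ioc_eq_integral_Ioo]
  rw [← hset, mul_div_assoc]
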